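/- Suppose m ≥ 1, a + m < 1, and α_j > 0 for j = 1,…,m. Then all zeros of the polynomial ŵ(x) = (1-x)^{m+a} · ∑_{k=0}^∞ (k+α₁)⋯(k+α_m) · ((a)_k/k!) x^k are real and lie in the open interval (0,1). -/

import Mathlib

open Polynomial Filter Finset

/-- Pochhammer symbol (rising factorial) `(a)_n` for real `a`. -/
noncomputable def asc (a : ℝ) (n : ℕ) : ℝ := (ascPochhammer ℝ n).eval a

namespace Stmt13

noncomputable def cs (a : ℝ) (α : ℕ → ℝ) (j k : ℕ) : ℝ :=
  (∏ i ∈ Finset.range j, ((k:ℝ) + α i)) * (asc a k / (k.factorial : ℝ))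

lemma asc_succ (a : ℝ) (k : ℕ) : asc a (k+1) = asc a k * (a + k) := by
  simp [asc, ascPochhammer_succ_right]

lemma tendsto_shift_div (c d : ℝ) :
    Tendsto (fun k : ℕ => ((k:ℝ) + c) / ((k:ℝ) + d)) atTop (nhds 1) := by
  have hd : Tendsto (fun k : ℕ => (k:ℝ) + d) atTop atTop :=
    tendsto_atTop_add_const_right _ d tendsto_natCast_atTop_atTop
  have h0 : Tendsto (fun k : ℕ => (c - d) / ((k:ℝ) + d)) atTop (nhds 0) :=
    Tendsto.div_atTop tendsto_const_nhds hd
  have h1 : Tendsto (fun k : ℕ => 1 + (c - d) / ((k:ℝ) + d)) atTop (nhds 1) := by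
    simpa using h0.const_add 1
  refine h1.congr' ?_
  filter_upwards [hd.eventually_gt_atTop 0] with k hk
  field_simp
  ring

lemma cs_ratio_summable (a : ℝ) (α : ℕ → ℝ) (hα : ∀ i, 0 < α i) (j : ℕ) {r : ℝ}
    (hr0 : 0 < r) (hr1 : r < 1) :
    Summable (fun k : ℕ => ((k:ℝ) + 1) * |cs a α j k| * r ^ k) := by
  have hpos : ∀ (k : ℕ) (i : ℕ), (0:ℝ) < (k:ℝ) + α i := fun k i => by
    have := hα i; positivity
  set ρ := fun k : ℕ => (∏ i ∈ Finset.range j, (((k:ℝ)+1+α i) / ((k:ℝ)+α i)))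
      * (|a + k| / ((k:ℝ)+1)) with hρ
  have hρ0 : ∀ k, 0 ≤ ρ k := by
    intro k
    refine mul_nonneg (Finset.prod_nonneg fun i _ => ?_) (by positivity)
    exact le_of_lt (div_pos (by have := hα i; positivity) (hpos k i))
  have habs : ∀ k, |cs a α j k| =
      (∏ i ∈ Finset.range j, ((k:ℝ) + α i)) * (|asc a k| / (k.factorial:ℝ)) := by
    intro k
    have hP : (0:ℝ) < ∏ i ∈ Finset.range j, ((k:ℝ) + α i) :=
      Finset.prod_pos fun i _ => hpos k i
    rw [cs, abs_mul, abs_of_pos hP, abs_div, Nat.abs_cast]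
  have key : ∀ k, |cs a α j (k+1)| = ρ k * |cs a α j k| := by
    intro k
    show |cs a α j (k+1)| = (∏ i ∈ Finset.range j, (((k:ℝ)+1+α i)/((k:ℝ)+α i)))
        * (|a + (k:ℝ)| / ((k:ℝ)+1)) * |cs a α j k|
    have e1 : (∏ i ∈ Finset.range j, (((k+1:ℕ):ℝ) + α i))
        = ∏ i ∈ Finset.range j, ((k:ℝ)+1+α i) :=
      Finset.prod_congr rfl fun i _ => by push_cast; ring
    have e2 : (((k+1).factorial : ℕ) : ℝ) = ((k:ℝ)+1) * (k.factorial : ℝ) := by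
      rw [Nat.factorial_succ]; push_cast; ring
    have h2 : |asc a (k+1)| = |asc a k| * |a + (k:ℝ)| := by rw [asc_succ, abs_mul]
    have hcan : (∏ i ∈ Finset.range j, (((k:ℝ)+1+α i)/((k:ℝ)+α i)))
        * (∏ i ∈ Finset.range j, ((k:ℝ)+α i))
        = ∏ i ∈ Finset.range j, ((k:ℝ)+1+α i) := by
      rw [← Finset.prod_mul_distrib]
      exact Finset.prod_congr rfl fun i _ => div_mul_cancel₀ _ (hpos k i).ne'
    rw [habs, habs, e1, e2, h2, ← hcan]
    have hk1 : ((k:ℝ)+1) ≠ 0 := by positivity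
    have hfac : ((k.factorial : ℕ) : ℝ) ≠ 0 := by positivity
    generalize (∏ i ∈ Finset.range j, (((k:ℝ)+1+α i)/((k:ℝ)+α i))) = Q
    generalize (∏ i ∈ Finset.range j, ((k:ℝ)+α i)) = P
    field_simp
  set g := fun k : ℕ => ((k:ℝ) + 1) * |cs a α j k| * r ^ k with hg
  have hrec : ∀ k, g (k+1) = (((k:ℝ)+2)/((k:ℝ)+1) * ρ k * r) * g k := by
    intro k
    simp only [hg]
    rw [key]
    have hk1 : ((k:ℝ)+1) ≠ 0 := by positivity
    push_cast
    field_simp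
    ring
  have hR : Tendsto (fun k : ℕ => ((k:ℝ)+2)/((k:ℝ)+1) * ρ k * r) atTop (nhds r) := by
    have h1 := tendsto_shift_div 2 1
    have hprod : Tendsto (fun k : ℕ => ∏ i ∈ Finset.range j, (((k:ℝ)+1+α i)/((k:ℝ)+α i)))
        atTop (nhds (∏ _i ∈ Finset.range j, (1:ℝ))) := by
      refine tendsto_finset_prod _ fun i _ => ?_
      have := tendsto_shift_div (1 + α i) (α i)
      refine this.congr fun k => by ring_nf
    have habs2 : Tendsto (fun k : ℕ => |a + (k:ℝ)| / ((k:ℝ)+1)) atTop (nhds 1) := by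
      refine (tendsto_shift_div a 1).congr' ?_
      filter_upwards [tendsto_natCast_atTop_atTop.eventually_ge_atTop (-a)] with k hk
      rw [abs_of_nonneg (by linarith), add_comm a]
    have h2 : Tendsto ρ atTop (nhds 1) := by
      have h3 := hprod.mul habs2
      simp only [Finset.prod_const_one, one_mul] at h3
      exact h3
    simpa using (h1.mul h2).mul_const r
  have hr'1 : (1+r)/2 < 1 := by linarith
  have hrr' : r < (1+r)/2 := by linarith
  refine summable_of_ratio_norm_eventually_le hr'1 ?_
  filter_upwards [hR.eventually_le_const hrr'] with k hk
  have hg0 : 0 ≤ g k := by positivity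
  have hR0 : 0 ≤ ((k:ℝ)+2)/((k:ℝ)+1) * ρ k * r :=
    mul_nonneg (mul_nonneg (by positivity) (hρ0 k)) hr0.le
  rw [Real.norm_eq_abs, Real.norm_eq_abs, hrec k, abs_of_nonneg (mul_nonneg hR0 hg0),
    abs_of_nonneg hg0]
  exact mul_le_mul_of_nonneg_right hk hg0


lemma summable_term (c : ℕ → ℝ)
    (H : ∀ r : ℝ, 0 < r → r < 1 → Summable (fun k : ℕ => ((k:ℝ)+1) * |c k| * r ^ k))
    {x : ℝ} (hx : |x| < 1) : Summable (fun k => c k * x ^ k) := by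
  have hx0 := abs_nonneg x
  have hr0 : 0 < (|x|+1)/2 := by linarith
  have hr1 : (|x|+1)/2 < 1 := by linarith
  have hxr : |x| ≤ (|x|+1)/2 := by linarith
  refine (H _ hr0 hr1).of_norm_bounded (fun k => ?_)
  rw [Real.norm_eq_abs, abs_mul, abs_pow]
  have h1 : |c k| * |x|^k ≤ |c k| * ((|x|+1)/2)^k :=
    mul_le_mul_of_nonneg_left (pow_le_pow_left₀ (abs_nonneg x) hxr _) (abs_nonneg _)
  have h2 : (0:ℝ) ≤ ((|x|+1)/2)^k := by positivity
  have h3 := abs_nonneg (c k)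
  have h4 : (0:ℝ) ≤ (k:ℝ) := Nat.cast_nonneg k
  nlinarith [mul_nonneg (mul_nonneg h4 h3) h2]

lemma hasDerivAt_tsum_pow (c : ℕ → ℝ)
    (H : ∀ r : ℝ, 0 < r → r < 1 → Summable (fun k : ℕ => ((k:ℝ)+1) * |c k| * r ^ k))
    {x : ℝ} (hx : |x| < 1) :
    Summable (fun k : ℕ => (k:ℝ) * c k * x ^ (k-1)) ∧
    HasDerivAt (fun y => ∑' k, c k * y ^ k) (∑' k : ℕ, (k:ℝ) * c k * x ^ (k-1)) x := by
  have hx0 := abs_nonneg x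
  set r : ℝ := (|x|+1)/2 with hrdef
  have hxr : |x| < r := by rw [hrdef]; linarith
  have hr0 : 0 < r := by rw [hrdef]; linarith
  have hr1 : r < 1 := by rw [hrdef]; linarith
  set u := fun k : ℕ => (k:ℝ) * |c k| * r ^ (k-1) with hu_def
  have hu : Summable u := by
    have h := (H r hr0 hr1).mul_left (1/r)
    refine h.of_nonneg_of_le (fun k => by positivity) (fun k => ?_)
    cases k with
    | zero => simp [hu_def]; positivity
    | succ n =>
      simp only [hu_def, Nat.add_sub_cancel]
      push_cast
      rw [pow_succ]
      have hle : ((n:ℝ)+1) ≤ ((n:ℝ)+1+1) := by linarith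
      have h1 : ((n:ℝ)+1) * |c (n+1)| * r ^ n ≤ ((n:ℝ)+1+1) * |c (n+1)| * r ^ n := by
        have := abs_nonneg (c (n+1))
        have hrn : (0:ℝ) ≤ r ^ n := by positivity
        nlinarith
      calc ((n:ℝ)+1) * |c (n+1)| * r ^ n ≤ ((n:ℝ)+1+1) * |c (n+1)| * r ^ n := h1
        _ = 1/r * (((n:ℝ)+1+1) * |c (n+1)| * (r ^ n * r)) := by
            field_simp
  have hg : ∀ (k:ℕ) (y:ℝ), y ∈ Metric.ball (0:ℝ) r →
      HasDerivAt (fun z => c k * z ^ k) ((k:ℝ) * c k * y^(k-1)) y := by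
    intro k y _
    have := (hasDerivAt_pow k y).const_mul (c k)
    exact this.congr_deriv (by ring)
  have hbound : ∀ (k:ℕ) (y:ℝ), y ∈ Metric.ball (0:ℝ) r →
      ‖(k:ℝ) * c k * y^(k-1)‖ ≤ u k := by
    intro k y hy
    rw [mem_ball_zero_iff, Real.norm_eq_abs] at hy
    rw [Real.norm_eq_abs, abs_mul, abs_mul, Nat.abs_cast, abs_pow]
    refine mul_le_mul_of_nonneg_left ?_ (by positivity)
    exact pow_le_pow_left₀ (abs_nonneg y) hy.le _
  have hball : x ∈ Metric.ball (0:ℝ) r := by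
    rw [mem_ball_zero_iff, Real.norm_eq_abs]; exact hxr
  have hsx : Summable (fun k => c k * x ^ k) := summable_term c H hx
  have hd := hasDerivAt_tsum_of_isPreconnected hu Metric.isOpen_ball
    (convex_ball (0:ℝ) r).isPreconnected hg hbound hball hsx hball
  exact ⟨Summable.of_norm_bounded hu (fun k => hbound k x hball), hd⟩


lemma asc_zero (a : ℝ) : asc a 0 = 1 := by simp [asc]

lemma binom_summableH (a : ℝ) :
    ∀ r : ℝ, 0 < r → r < 1 →
      Summable (fun k : ℕ => ((k:ℝ)+1) * |asc a k / (k.factorial:ℝ)| * r ^ k) := by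
  intro r hr0 hr1
  have h := cs_ratio_summable a (fun _ => 1) (fun _ => one_pos) 0 hr0 hr1
  refine h.congr fun k => ?_
  simp [cs]

lemma binom_hasSum (a : ℝ) {x : ℝ} (hx : |x| < 1) :
    HasSum (fun k : ℕ => asc a k / (k.factorial:ℝ) * x ^ k) ((1 - x) ^ (-a)) := by
  set c : ℕ → ℝ := fun k => asc a k / (k.factorial:ℝ) with hc
  have H := binom_summableH a
  set f : ℝ → ℝ := fun y => ∑' k : ℕ, c k * y ^ k with hf
  set D : ℝ → ℝ := fun y => ∑' k : ℕ, (k:ℝ) * c k * y ^ (k-1) with hD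
  have hder : ∀ y : ℝ, |y| < 1 → HasDerivAt f (D y) y := fun y hy =>
    (hasDerivAt_tsum_pow c H hy).2
  have hsumD : ∀ y : ℝ, |y| < 1 → Summable (fun k : ℕ => (k:ℝ) * c k * y ^ (k-1)) :=
    fun y hy => (hasDerivAt_tsum_pow c H hy).1
  have hsumf : ∀ y : ℝ, |y| < 1 → Summable (fun k : ℕ => c k * y ^ k) :=
    fun y hy => summable_term c H hy
  have hid : ∀ y : ℝ, |y| < 1 → (1 - y) * D y = a * f y := by
    intro y hy
    have h1 : HasSum (fun k : ℕ => (k:ℝ) * c k * y ^ (k-1)) (D y) := (hsumD y hy).hasSum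
    have h2 : HasSum (fun k : ℕ => ((k+1:ℕ):ℝ) * c (k+1) * y ^ (k+1-1)) (D y) := by
      refine (hasSum_nat_add_iff (f := fun k : ℕ => (k:ℝ) * c k * y ^ (k-1)) 1).2 ?_
      simpa using h1
    have hterm : ∀ k : ℕ, ((k+1:ℕ):ℝ) * c (k+1) * y ^ (k+1-1)
        = a * (c k * y ^ k) + (k:ℝ) * c k * y ^ k := by
      intro k
      have hk1 : ((k:ℝ)+1) ≠ 0 := by positivity
      have hfac : ((k.factorial:ℕ):ℝ) ≠ 0 := by positivity
      simp only [hc, Nat.add_sub_cancel, asc_succ, Nat.factorial_succ]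
      push_cast
      field_simp
    simp only [hterm] at h2
    have hterm2 : ∀ k : ℕ, y * ((k:ℝ) * c k * y ^ (k-1)) = (k:ℝ) * c k * y ^ k := by
      intro k
      cases k with
      | zero => simp
      | succ n => simp only [Nat.add_sub_cancel, pow_succ]; ring
    have h4 := h1.mul_left y
    simp only [hterm2] at h4
    have h5 : HasSum (fun k : ℕ => a * (c k * y ^ k)) (a * f y) :=
      ((hsumf y hy).hasSum).mul_left a
    have h6 := h5.add h4
    have := h2.unique h6
    linarith
  set g : ℝ → ℝ := fun y => (1-y) ^ a * f y with hg
  have hg' : ∀ y : ℝ, y ∈ Set.Ioo (-1:ℝ) 1 → HasDerivAt g 0 y := by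
    intro y hy
    have hy1 : |y| < 1 := abs_lt.2 ⟨hy.1, hy.2⟩
    have hpy : 0 < 1 - y := by have := hy.2; linarith
    have hbase : HasDerivAt (fun z : ℝ => 1 - z) (-1) y := by
      simpa using (hasDerivAt_id y).const_sub 1
    have h6 : HasDerivAt (fun z : ℝ => (1-z) ^ a)
        ((-1) * a * (1-y) ^ (a-1)) y := hbase.rpow_const (Or.inl hpy.ne')
    have h7 := h6.mul (hder y hy1)
    have e : (1-y) ^ a = (1-y) ^ (a-1) * (1-y) := by
      have e2 := Real.rpow_add_one hpy.ne' (a-1)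
      rw [sub_add_cancel] at e2
      exact e2
    have h0 : (-1) * a * (1-y) ^ (a-1) * f y + (1-y) ^ a * D y = 0 := by
      rw [e]
      linear_combination ((1-y) ^ (a-1)) * hid y hy1
    rw [h0] at h7
    exact h7
  have hconst : ∀ y : ℝ, |y| < 1 → g y = g 0 := by
    intro y hy
    have hy' := abs_lt.1 hy
    rcases lt_trichotomy y 0 with h | h | h
    · have key := constant_of_has_deriv_right_zero (f := g) (a := y) (b := 0)
        (fun t ht => ((hg' t ⟨by linarith [ht.1], by linarith [ht.2]⟩).continuousAt).continuousWithinAt)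
        (fun t ht => ((hg' t ⟨by linarith [ht.1], by linarith [ht.2]⟩).hasDerivWithinAt))
      have := key 0 ⟨h.le, le_refl 0⟩
      simpa using this.symm
    · rw [h]
    · have key := constant_of_has_deriv_right_zero (f := g) (a := 0) (b := y)
        (fun t ht => ((hg' t ⟨by linarith [ht.1], by linarith [ht.2]⟩).continuousAt).continuousWithinAt)
        (fun t ht => ((hg' t ⟨by linarith [ht.1], by linarith [ht.2]⟩).hasDerivWithinAt))
      exact key y ⟨h.le, le_refl y⟩
  have hf0 : f 0 = 1 := by
    simp only [hf]
    rw [tsum_eq_single 0 (by intro k hk; simp [zero_pow hk])]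
    simp [hc, asc_zero]
  have g0 : g 0 = 1 := by
    simp only [hg, sub_zero, Real.one_rpow, one_mul]
    exact hf0
  have hpx : 0 < 1 - x := by have := (abs_lt.1 hx).2; linarith
  have hgx : (1-x) ^ a * f x = 1 := by
    have := hconst x hx
    rw [g0] at this
    exact this
  have hA : (1-x) ^ a ≠ (0:ℝ) := (Real.rpow_pos_of_pos hpx a).ne'
  have hfx0 : f x = ((1-x) ^ a)⁻¹ := by
    field_simp
    linear_combination hgx
  have hfx : f x = (1-x) ^ (-a) := hfx0.trans (Real.rpow_neg hpx.le a).symm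
  exact hfx ▸ (hsumf x hx).hasSum


noncomputable def Wp (a : ℝ) (α : ℕ → ℝ) : ℕ → Polynomial ℝ
  | 0 => 1
  | (j+1) => X * (1 - X) * (derivative (Wp a α j))
      + (C ((j : ℝ) + a) * X + C (α j) * (1 - X)) * Wp a α j

lemma cs_succ (a : ℝ) (α : ℕ → ℝ) (j k : ℕ) :
    cs a α (j+1) k = ((k:ℝ) + α j) * cs a α j k := by
  simp [cs, Finset.prod_range_succ]; ring

lemma Wp_hasSum (a : ℝ) (α : ℕ → ℝ) (hα : ∀ i, 0 < α i) :
    ∀ (j : ℕ) {x : ℝ}, |x| < 1 → HasSum (fun k : ℕ => cs a α j k * x ^ k)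
      ((1 - x) ^ (-((j:ℝ) + a)) * (Wp a α j).eval x) := by
  intro j
  induction j with
  | zero =>
    intro x hx
    have h := binom_hasSum a hx
    have : (1 - x) ^ (-(((0:ℕ):ℝ) + a)) * (Wp a α 0).eval x = (1-x) ^ (-a) := by
      simp [Wp]
    rw [this]
    refine h.congr_fun fun k => ?_
    simp [cs]
  | succ j ih =>
    intro x hx
    set c : ℕ → ℝ := cs a α j with hc
    have H : ∀ r : ℝ, 0 < r → r < 1 → Summable (fun k : ℕ => ((k:ℝ)+1) * |c k| * r ^ k) :=
      fun r h0 h1 => cs_ratio_summable a α hα j h0 h1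
    set f : ℝ → ℝ := fun y => ∑' k : ℕ, c k * y ^ k with hf
    have hfval : ∀ y : ℝ, |y| < 1 →
        f y = (1 - y) ^ (-((j:ℝ)+a)) * (Wp a α j).eval y :=
      fun y hy => (ih hy).tsum_eq
    have hDD := hasDerivAt_tsum_pow c H hx
    set D : ℝ := ∑' k : ℕ, (k:ℝ) * c k * x ^ (k-1) with hDdef
    have hderiv : HasDerivAt f D x := hDD.2
    have hsumD : Summable (fun k : ℕ => (k:ℝ) * c k * x ^ (k-1)) := hDD.1
    have hx' := abs_lt.1 hx
    have hpx : 0 < 1 - x := by linarith [hx'.2]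
    have hbase : HasDerivAt (fun z : ℝ => 1 - z) (-1) x := by
      simpa using (hasDerivAt_id x).const_sub 1
    have h6 : HasDerivAt (fun z : ℝ => (1-z) ^ (-((j:ℝ)+a)))
        ((-1) * (-((j:ℝ)+a)) * (1-x) ^ (-((j:ℝ)+a)-1)) x := hbase.rpow_const (Or.inl hpx.ne')
    have hP : HasDerivAt (fun z : ℝ => (Wp a α j).eval z) ((Wp a α j).derivative.eval x) x :=
      (Wp a α j).hasDerivAt x
    have h7 := h6.mul hP
    have hEq : f =ᶠ[nhds x] fun z => (1-z) ^ (-((j:ℝ)+a)) * (Wp a α j).eval z := by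
      filter_upwards [Ioo_mem_nhds hx'.1 hx'.2] with z hz
      exact hfval z (abs_lt.2 ⟨hz.1, hz.2⟩)
    have h8 : HasDerivAt f ((-1) * (-((j:ℝ)+a)) * (1-x) ^ (-((j:ℝ)+a)-1) * (Wp a α j).eval x
        + (1-x) ^ (-((j:ℝ)+a)) * (Wp a α j).derivative.eval x) x :=
      h7.congr_of_eventuallyEq hEq
    have hDval : D = (-1) * (-((j:ℝ)+a)) * (1-x) ^ (-((j:ℝ)+a)-1) * (Wp a α j).eval x
        + (1-x) ^ (-((j:ℝ)+a)) * (Wp a α j).derivative.eval x := hderiv.unique h8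
    have h1 : HasSum (fun k : ℕ => (k:ℝ) * c k * x ^ (k-1)) D := hsumD.hasSum
    have hterm2 : ∀ k : ℕ, x * ((k:ℝ) * c k * x ^ (k-1)) = (k:ℝ) * c k * x ^ k := by
      intro k
      cases k with
      | zero => simp
      | succ n => simp only [Nat.add_sub_cancel, pow_succ]; ring
    have h4 := h1.mul_left x
    simp only [hterm2] at h4
    have h5 := (ih hx).mul_left (α j)
    have h9 := h4.add h5
    have hterm3 : (fun k : ℕ => (k:ℝ) * c k * x ^ k + α j * (c k * x ^ k))
        = fun k : ℕ => cs a α (j+1) k * x ^ k := by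
      funext k
      simp only [hc, cs_succ]
      ring
    rw [hterm3] at h9
    have hval : x * D + α j * ((1 - x) ^ (-((j:ℝ)+a)) * (Wp a α j).eval x)
        = (1 - x) ^ (-(((j+1:ℕ):ℝ) + a)) * (Wp a α (j+1)).eval x := by
      rw [hDval]
      have ecast : (((j+1:ℕ)):ℝ) = (j:ℝ)+1 := by push_cast; ring
      have e1 : (1-x) ^ (-((j:ℝ)+a)) = (1-x) ^ (-((j:ℝ)+a)-1) * (1-x) := by
        have e2 := Real.rpow_add_one hpx.ne' (-((j:ℝ)+a)-1)
        rw [sub_add_cancel] at e2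
        exact e2
      have e3 : -(((j:ℝ)+1) + a) = -((j:ℝ)+a)-1 := by ring
      have eW : (Wp a α (j+1)).eval x
          = x*(1-x)*((Wp a α j).derivative.eval x)
            + (((j:ℝ)+a)*x + α j*(1-x)) * (Wp a α j).eval x := by
        simp only [Wp]
        simp [eval_mul, eval_add, eval_sub]
      rw [ecast, e3, eW, e1]
      ring
    rw [hval] at h9
    exact h9


lemma Wp_succ_eval (a : ℝ) (α : ℕ → ℝ) (j : ℕ) (x : ℝ) :
    (Wp a α (j+1)).eval x
      = x*(1-x)*((Wp a α j).derivative.eval x)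
        + (((j:ℝ)+a)*x + α j*(1-x)) * (Wp a α j).eval x := by
  simp only [Wp]
  simp [eval_mul, eval_add, eval_sub]

lemma Wp_roots (a : ℝ) (α : ℕ → ℝ) (hα : ∀ i, 0 < α i) :
    ∀ m0 : ℕ, (∀ j : ℕ, j < m0 → (j:ℝ) + a < 0) →
    ∃ z : Fin m0 → ℝ, StrictMono z ∧ (∀ i, 0 < z i ∧ z i < 1) ∧
      Wp a α m0 = C (∏ i ∈ Finset.range m0, (a - α i)) * ∏ i, (X - C (z i)) := by
  intro m0
  induction m0 with
  | zero =>
    intro _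
    exact ⟨Fin.elim0, by intro i j h; exact i.elim0, fun i => i.elim0, by simp [Wp]⟩
  | succ j ih =>
    intro hja
    obtain ⟨z, hzmono, hz01, hW⟩ := ih (fun i hi => hja i (Nat.lt_succ_of_lt hi))
    have hjalt : (j:ℝ) + a < 0 := hja j (Nat.lt_succ_self j)
    have ha : a < 0 := by
      have h := hja 0 (Nat.succ_pos j)
      push_cast at h
      linarith
    set cj : ℝ := ∏ i ∈ Finset.range j, (a - α i) with hcj
    have hcjne : cj ≠ 0 := by
      rw [hcj]
      refine Finset.prod_ne_zero_iff.2 fun i _ => ?_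
      have := hα i
      intro hcon
      have : a = α i := by linarith [sub_eq_zero.1 hcon]
      linarith
    have hQmonic : (∏ i : Fin j, (X - C (z i))).Monic :=
      monic_prod_of_monic _ _ fun i _ => monic_X_sub_C _
    have hQdeg : (∏ i : Fin j, (X - C (z i))).natDegree = j := by
      rw [Polynomial.natDegree_prod _ _ fun i _ => X_sub_C_ne_zero _]
      simp
    have hWne : Wp a α j ≠ 0 := by
      rw [hW]
      exact mul_ne_zero (by simpa using hcjne) hQmonic.ne_zero
    have hWdeg : (Wp a α j).natDegree = j := by
      rw [hW, natDegree_C_mul hcjne, hQdeg]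
    have hWlc : (Wp a α j).coeff j = cj := by
      have h1 : (Wp a α j).leadingCoeff = cj := by
        rw [hW, leadingCoeff_mul, leadingCoeff_C, hQmonic.leadingCoeff, mul_one]
      rw [Polynomial.leadingCoeff, hWdeg] at h1
      exact h1
    set P1 := Wp a α (j+1) with hP1
    have hP1eq : P1 = X * (1 - X) * (derivative (Wp a α j))
        + (C ((j : ℝ) + a) * X + C (α j) * (1 - X)) * Wp a α j := rfl
    have hDderiv : (derivative (Wp a α j)).natDegree ≤ j - 1 := by
      have h := natDegree_derivative_le (Wp a α j)
      rwa [hWdeg] at h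
    have hcoeff : P1.coeff (j+1) = (a - α j) * cj := by
      have hsplit : P1 = X * ((1 - X) * derivative (Wp a α j))
          + (C ((j:ℝ)+a) * (X * Wp a α j)
            + (C (α j) * Wp a α j - C (α j) * (X * Wp a α j))) := by
        rw [hP1eq]; ring
      rw [hsplit, coeff_add, coeff_add, coeff_sub, coeff_X_mul, coeff_C_mul, coeff_C_mul,
        coeff_C_mul, coeff_X_mul]
      have hWtop : (Wp a α j).coeff (j+1) = 0 :=
        coeff_eq_zero_of_natDegree_lt (by omega)
      have hmul : ((1 - X) * derivative (Wp a α j)).coeff j = -((j:ℝ) * cj) := by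
        cases j with
        | zero => simp [Wp]
        | succ n =>
          rw [sub_mul, one_mul, coeff_sub, coeff_X_mul]
          have h1 : (derivative (Wp a α (n+1))).coeff (n+1) = 0 :=
            coeff_eq_zero_of_natDegree_lt (by omega)
          have h2 : (derivative (Wp a α (n+1))).coeff n
              = (Wp a α (n+1)).coeff (n+1) * ((n:ℝ)+1) := by
            rw [coeff_derivative]
          rw [h1, h2, hWlc]
          push_cast
          ring
      rw [hmul, hWtop, hWlc]
      ring
    have hdegle : P1.natDegree ≤ j + 1 := by
      rw [hP1eq]
      refine le_trans (natDegree_add_le _ _) (max_le ?_ ?_)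
      · cases j with
        | zero =>
          have hD0 : derivative (Wp a α 0) = 0 := by simp [Wp]
          rw [hD0, mul_zero]
          simp
        | succ n =>
          refine le_trans natDegree_mul_le ?_
          have h1 : (X * (1 - X) : ℝ[X]).natDegree ≤ 2 := by
            refine le_trans natDegree_mul_le ?_
            have h2 : (1 - X : ℝ[X]).natDegree ≤ 1 :=
              le_trans (natDegree_sub_le _ _) (by simp)
            have h3 := natDegree_X_le (R := ℝ)
            omega
          have h4 := hDderiv
          omega
      · refine le_trans natDegree_mul_le ?_
        have h1 : (C ((j:ℝ)+a) * X + C (α j) * (1 - X)).natDegree ≤ 1 := by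
          refine le_trans (natDegree_add_le _ _) (max_le ?_ ?_)
          · refine le_trans natDegree_mul_le ?_
            simp
          · refine le_trans natDegree_mul_le ?_
            have h2 : (1 - X : ℝ[X]).natDegree ≤ 1 :=
              le_trans (natDegree_sub_le _ _) (by simp)
            simp at h2 ⊢
            omega
        omega
    have hlcne : (a - α j) * cj ≠ 0 := by
      refine mul_ne_zero ?_ hcjne
      have := hα j
      intro hcon
      have : a = α j := by linarith [sub_eq_zero.1 hcon]
      linarith
    have hP1deg : P1.natDegree = j+1 :=
      natDegree_eq_of_le_of_coeff_ne_zero hdegle (by rw [hcoeff]; exact hlcne)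
    have hP1lc : P1.leadingCoeff = (a - α j) * cj := by
      rw [Polynomial.leadingCoeff, hP1deg, hcoeff]
    have hP1ne : P1 ≠ 0 := leadingCoeff_ne_zero.1 (by rw [hP1lc]; exact hlcne)
    -- Rolle setup
    set β : ℝ := -((j:ℝ) + a) with hβdef
    have hβ : 0 < β := by rw [hβdef]; linarith
    set G : ℝ → ℝ := fun t => t ^ (α j) * (1-t) ^ β * (Wp a α j).eval t with hG
    have hGcont : Continuous G := by
      refine (Continuous.mul ?_ ?_).mul (Wp a α j).continuous
      · exact continuous_iff_continuousAt.2 fun t =>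
          Real.continuousAt_rpow_const t _ (Or.inr (hα j).le)
      · have h1 : Continuous fun t : ℝ => 1 - t := continuous_const.sub continuous_id
        exact continuous_iff_continuousAt.2 fun t =>
          (Real.continuousAt_rpow_const (1-t) _ (Or.inr hβ.le)).comp h1.continuousAt
    have hGderiv : ∀ t, t ∈ Set.Ioo (0:ℝ) 1 →
        HasDerivAt G (t ^ (α j - 1) * (1-t) ^ (β - 1) * (Wp a α (j+1)).eval t) t := by
      intro t ht
      have ht0 : 0 < t := ht.1
      have ht1 : 0 < 1 - t := by have := ht.2; linarith
      have hA : HasDerivAt (fun s : ℝ => s ^ (α j)) (α j * t ^ (α j - 1)) t :=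
        Real.hasDerivAt_rpow_const (Or.inl ht0.ne')
      have hbase : HasDerivAt (fun s : ℝ => 1 - s) (-1) t := by
        simpa using (hasDerivAt_id t).const_sub 1
      have hB : HasDerivAt (fun s : ℝ => (1-s) ^ β) ((-1) * β * (1-t) ^ (β-1)) t :=
        hbase.rpow_const (Or.inl ht1.ne')
      have hC : HasDerivAt (fun s : ℝ => (Wp a α j).eval s) ((Wp a α j).derivative.eval t) t :=
        (Wp a α j).hasDerivAt t
      have h7 := (hA.mul hB).mul hC
      refine h7.congr_deriv (Eq.symm ?_)
      simp only [Pi.mul_apply]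
      have e1 : t ^ (α j) = t ^ (α j - 1) * t := by
        have e := Real.rpow_add_one ht0.ne' (α j - 1)
        rw [sub_add_cancel] at e
        exact e
      have e2 : (1-t) ^ β = (1-t) ^ (β-1) * (1-t) := by
        have e := Real.rpow_add_one ht1.ne' (β - 1)
        rw [sub_add_cancel] at e
        exact e
      rw [Wp_succ_eval, e1, e2, hβdef]
      ring
    have hGz : ∀ i : Fin j, G (z i) = 0 := by
      intro i
      have hzero : (Wp a α j).eval (z i) = 0 := by
        rw [hW]
        simp only [eval_mul, eval_C, eval_prod, eval_sub, eval_X]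
        refine mul_eq_zero_of_right _ (Finset.prod_eq_zero (Finset.mem_univ i) ?_)
        simp
      simp [hG, hzero]
    have hG0 : G 0 = 0 := by simp [hG, Real.zero_rpow (hα j).ne']
    have hG1 : G 1 = 0 := by simp [hG, Real.zero_rpow hβ.ne']
    set Z : ℕ → ℝ := fun n => if h : n < j then z ⟨n, h⟩ else 1 with hZ
    set Y : ℕ → ℝ := fun n => if n = 0 then 0 else Z (n-1) with hY
    have hY0 : Y 0 = 0 := by simp [hY]
    have hYlast : Y (j+1) = 1 := by
      simp only [hY, hZ]
      rw [if_neg (by omega), Nat.add_sub_cancel, dif_neg (by omega)]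
    have hYmid : ∀ n, 1 ≤ n → n ≤ j → ∀ h : n - 1 < j, Y n = z ⟨n-1, h⟩ := by
      intro n h1 h2 h
      simp only [hY, hZ]
      rw [if_neg (by omega), dif_pos h]
    have hYzero : ∀ n, n ≤ j+1 → G (Y n) = 0 := by
      intro n hn
      rcases Nat.eq_zero_or_pos n with rfl | hpos
      · rw [hY0]; exact hG0
      rcases Nat.lt_or_ge n (j+1) with hlt | hge
      · have hh : n - 1 < j := by omega
        rw [hYmid n hpos (by omega) hh]
        exact hGz _
      · have hn2 : n = j+1 := by omega
        rw [hn2, hYlast]; exact hG1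
    have hYlt : ∀ n1 n2, n1 < n2 → n2 ≤ j+1 → Y n1 < Y n2 := by
      intro n1 n2 h12 h2
      rcases Nat.eq_zero_or_pos n1 with rfl | hpos1
      · rw [hY0]
        rcases Nat.lt_or_ge n2 (j+1) with hlt | hge
        · have hh : n2 - 1 < j := by omega
          rw [hYmid n2 (by omega) (by omega) hh]
          exact (hz01 _).1
        · have hn2 : n2 = j+1 := by omega
          rw [hn2, hYlast]; norm_num
      · have hh1 : n1 - 1 < j := by omega
        rw [hYmid n1 hpos1 (by omega) hh1]
        rcases Nat.lt_or_ge n2 (j+1) with hlt | hge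
        · have hh2 : n2 - 1 < j := by omega
          rw [hYmid n2 (by omega) (by omega) hh2]
          exact hzmono (by simp [Fin.lt_def]; omega)
        · have hn2 : n2 = j+1 := by omega
          rw [hn2, hYlast]
          exact (hz01 _).2
    have hYle : ∀ n1 n2, n1 ≤ n2 → n2 ≤ j+1 → Y n1 ≤ Y n2 := by
      intro n1 n2 h12 h2
      rcases eq_or_lt_of_le h12 with rfl | h
      · exact le_refl _
      · exact (hYlt _ _ h h2).le
    have hY01 : ∀ n, n ≤ j+1 → 0 ≤ Y n ∧ Y n ≤ 1 := by
      intro n hn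
      constructor
      · have h := hYle 0 n (Nat.zero_le n) hn
        rwa [hY0] at h
      · have h := hYle n (j+1) hn (le_refl _)
        rwa [hYlast] at h
    have hgap : ∀ i : Fin (j+1), ∃ t, Y (i:ℕ) < t ∧ t < Y ((i:ℕ)+1)
        ∧ (Wp a α (j+1)).eval t = 0 := by
      intro i
      have hii : (i:ℕ) < j+1 := i.isLt
      have hi1 : (i:ℕ) + 1 ≤ j + 1 := by omega
      have hlt : Y (i:ℕ) < Y ((i:ℕ)+1) := hYlt _ _ (Nat.lt_succ_self _) hi1
      have h01a : 0 ≤ Y (i:ℕ) := (hY01 _ (by omega)).1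
      have h01b : Y ((i:ℕ)+1) ≤ 1 := (hY01 _ hi1).2
      obtain ⟨t, htmem, ht0⟩ := exists_hasDerivAt_eq_zero hlt hGcont.continuousOn
        (by rw [hYzero _ (by omega), hYzero _ hi1])
        (fun x hx => hGderiv x ⟨lt_of_le_of_lt h01a hx.1, lt_of_lt_of_le hx.2 h01b⟩)
      refine ⟨t, htmem.1, htmem.2, ?_⟩
      have ht0' : 0 < t := lt_of_le_of_lt h01a htmem.1
      have ht1' : t < 1 := lt_of_lt_of_le htmem.2 h01b
      have hp1 : (0:ℝ) < t ^ (α j - 1) := Real.rpow_pos_of_pos ht0' _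
      have hp2 : (0:ℝ) < (1-t) ^ (β - 1) := Real.rpow_pos_of_pos (by linarith) _
      rcases mul_eq_zero.1 ht0 with h | h
      · rcases mul_eq_zero.1 h with h' | h'
        · exact absurd h' hp1.ne'
        · exact absurd h' hp2.ne'
      · exact h
    choose w hw1 hw2 hw3 using hgap
    have hwmono : StrictMono w := by
      intro i1 i2 h
      have hi2 : (i2:ℕ) < j+1 := i2.isLt
      have hstep : Y ((i1:ℕ)+1) ≤ Y (i2:ℕ) :=
        hYle _ _ (by have := Fin.lt_iff_val_lt_val.1 h; omega) (by omega)
      exact lt_trans (lt_of_lt_of_le (hw2 i1) hstep) (hw1 i2)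
    have hw01 : ∀ i, 0 < w i ∧ w i < 1 := by
      intro i
      have hii : (i:ℕ) < j+1 := i.isLt
      constructor
      · exact lt_of_le_of_lt (hY01 _ (by omega)).1 (hw1 i)
      · exact lt_of_lt_of_le (hw2 i) (hY01 _ (by omega)).2
    have hroots : ∀ i : Fin (j+1), w i ∈ P1.roots := fun i =>
      mem_roots'.2 ⟨hP1ne, hw3 i⟩
    set M : Multiset ℝ := Multiset.map w Finset.univ.val with hM
    have hMnodup : M.Nodup := Finset.univ.nodup.map hwmono.injective
    have hMle : M ≤ P1.roots := by
      rw [Multiset.le_iff_count]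
      intro x
      by_cases hx : x ∈ M
      · rw [Multiset.count_eq_one_of_mem hMnodup hx]
        obtain ⟨i, _, rfl⟩ := Multiset.mem_map.1 hx
        exact Multiset.one_le_count_iff_mem.2 (hroots i)
      · rw [Multiset.count_eq_zero_of_notMem hx]
        exact Nat.zero_le _
    have hMcard : Multiset.card M = j+1 := by simp [hM]
    have hcard : Multiset.card P1.roots = j+1 :=
      le_antisymm (le_trans (card_roots' P1) (le_of_eq hP1deg))
        (hMcard ▸ Multiset.card_le_card hMle)
    have hMeq : P1.roots = M :=
      (Multiset.eq_of_le_of_card_le hMle (by rw [hMcard, hcard])).symm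
    have hfact := C_leadingCoeff_mul_prod_multiset_X_sub_C (p := P1)
      (by rw [hcard, hP1deg])
    refine ⟨w, hwmono, hw01, ?_⟩
    calc Wp a α (j+1) = P1 := rfl
      _ = C P1.leadingCoeff * (Multiset.map (fun t => X - C t) P1.roots).prod := hfact.symm
      _ = C ((a - α j) * cj) * (Multiset.map (fun t => X - C t) M).prod := by
          rw [hP1lc, hMeq]
      _ = C (∏ i ∈ Finset.range (j+1), (a - α i)) * ∏ i, (X - C (w i)) := by
          congr 1
          · rw [Finset.prod_range_succ, hcj]
            ring_nf
          · rw [hM, Multiset.map_map, Finset.prod_eq_multiset_prod]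
            rfl

end Stmt13

theorem stmt_13 (m : ℕ) (hm : 1 ≤ m) (a : ℝ) (ham : a + m < 1)
    (α : Fin m → ℝ) (hα : ∀ i, 0 < α i)
    (w : Polynomial ℝ)
    (hw : ∀ x : ℝ, |x| < 1 →
      w.eval x = Real.rpow (1 - x) ((m : ℝ) + a) *
        ∑' k : ℕ, (∏ i, ((k : ℝ) + α i)) * (asc a k / (k.factorial : ℝ)) * x ^ k) :
    ∃ z : Fin m → ℝ, (∀ i, 0 < z i ∧ z i < 1) ∧
      w = C w.leadingCoeff * ∏ i, (X - C (z i)) := by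
  classical
  open Stmt13 in
  set α' : ℕ → ℝ := fun n => if h : n < m then α ⟨n, h⟩ else 1 with hα'
  have hα'pos : ∀ i, 0 < α' i := by
    intro i
    rw [hα']
    dsimp only
    split_ifs with h
    · exact hα _
    · exact one_pos
  have hrp : ∀ u v : ℝ, Real.rpow u v = u ^ v := fun _ _ => rfl
  have hprod : ∀ k : ℕ, (∏ i, ((k:ℝ) + α i)) = ∏ i ∈ Finset.range m, ((k:ℝ) + α' i) := by
    intro k
    rw [← Fin.prod_univ_eq_prod_range]
    refine Finset.prod_congr rfl fun i _ => ?_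
    rw [hα']
    dsimp only
    rw [dif_pos i.isLt]
  have key : ∀ x : ℝ, |x| < 1 → w.eval x = (Stmt13.Wp a α' m).eval x := by
    intro x hx
    have hx' := abs_lt.1 hx
    have hpx : 0 < 1 - x := by linarith [hx'.2]
    have hs := Stmt13.Wp_hasSum a α' hα'pos m hx
    have hts : ∑' k : ℕ, (∏ i, ((k : ℝ) + α i)) * (asc a k / (k.factorial : ℝ)) * x ^ k
        = (1 - x) ^ (-((m:ℝ) + a)) * (Stmt13.Wp a α' m).eval x := by
      rw [← hs.tsum_eq]
      refine tsum_congr fun k => ?_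
      rw [Stmt13.cs, hprod k]
    rw [hw x hx, hts, hrp, ← mul_assoc, ← Real.rpow_add hpx]
    rw [add_neg_cancel, Real.rpow_zero, one_mul]
  have hwW : w = Stmt13.Wp a α' m := by
    apply Polynomial.eq_of_infinite_eval_eq
    refine Set.Infinite.mono ?_ (Set.Ioo_infinite (by norm_num : (-1:ℝ) < 1))
    intro x hx
    exact key x (abs_lt.2 ⟨hx.1, hx.2⟩)
  obtain ⟨z, hzmono, hz01, hfac⟩ := Stmt13.Wp_roots a α' hα'pos m (fun j hj => by
    have h1 : (j:ℝ) + 1 ≤ (m:ℝ) := by exact_mod_cast hj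
    linarith)
  refine ⟨z, hz01, ?_⟩
  have hmonic : (∏ i : Fin m, (X - C (z i))).Monic :=
    monic_prod_of_monic _ _ fun i _ => monic_X_sub_C _
  have hlc : w.leadingCoeff = ∏ i ∈ Finset.range m, (a - α' i) := by
    rw [hwW, hfac, leadingCoeff_mul, leadingCoeff_C, hmonic.leadingCoeff, mul_one]
  calc w = Stmt13.Wp a α' m := hwW
    _ = C (∏ i ∈ Finset.range m, (a - α' i)) * ∏ i, (X - C (z i)) := hfac
    _ = C w.leadingCoeff * ∏ i, (X - C (z i)) := by rw [hlc]
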